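/- For all integers m ≥ 0, n ≥ 2 and s with 3 ≤ s ≤ n − 1, the K_s-structure connectivity of the DCell network satisfies κ(D_{m,n}; K_s) ≥ ⌈(n−1)/s⌉ + m. -/

import Mathlib

open SimpleGraph

/-! ## Structure connectivity -/

/-- The set of vertices covered by a family of subgraphs of `G`. -/
def SimpleGraph.cutVerts {V : Type*} {G : SimpleGraph V} (F : Finset G.Subgraph) : Set V :=
  ⋃ A ∈ F, A.verts

/-- A family `F` of subgraphs of `G` is a subgraph cut if deleting all vertices of members of `F`
leaves a graph that is disconnected or has at most one vertex. -/
def SimpleGraph.IsSubgraphCut {V : Type*} (G : SimpleGraph V) (F : Finset G.Subgraph) : Prop :=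
  ¬ (G.induce (SimpleGraph.cutVerts F)ᶜ).Connected ∨ ((SimpleGraph.cutVerts F)ᶜ : Set V).Subsingleton

/-- An `H`-structure cut of `G`: a subgraph cut all of whose members are isomorphic to `H`. -/
def SimpleGraph.IsStructureCut {V W : Type*} (G : SimpleGraph V) (H : SimpleGraph W)
    (F : Finset G.Subgraph) : Prop :=
  G.IsSubgraphCut F ∧ ∀ A ∈ F, Nonempty (A.coe ≃g H)

/-- An `H`-substructure cut of `G`: a subgraph cut all of whose members are isomorphic to a
connected subgraph of `H`. -/
def SimpleGraph.IsSubstructureCut {V W : Type*} (G : SimpleGraph V) (H : SimpleGraph W)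
    (F : Finset G.Subgraph) : Prop :=
  G.IsSubgraphCut F ∧ ∀ A ∈ F, ∃ K : H.Subgraph, K.Connected ∧ Nonempty (A.coe ≃g K.coe)

/-- The `H`-structure connectivity `κ(G; H)`. -/
noncomputable def SimpleGraph.structConn {V W : Type*} (G : SimpleGraph V) (H : SimpleGraph W) : ℕ :=
  sInf {k | ∃ F : Finset G.Subgraph, G.IsStructureCut H F ∧ F.card = k}

/-- The `H`-substructure connectivity `κˢ(G; H)`. -/
noncomputable def SimpleGraph.substructConn {V W : Type*} (G : SimpleGraph V) (H : SimpleGraph W) : ℕ :=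
  sInf {k | ∃ F : Finset G.Subgraph, G.IsSubstructureCut H F ∧ F.card = k}

/-- The star `K_{1,t}` with center `0` and `t` leaves. -/
def starGraph (t : ℕ) : SimpleGraph (Fin (t + 1)) :=
  SimpleGraph.fromRel (fun i _ => i = 0)
/-! ## The DCell network -/

/-- `tcell n m` is the number of servers of the `m`-dimensional DCell with `n`-port switches. -/
def tcell (n : ℕ) : ℕ → ℕ
  | 0 => n
  | m + 1 => tcell n m * (tcell n m + 1)

/-- Vertices (labels `x_m x_{m-1} … x_0`) of the `m`-dimensional DCell with `n`-port switches. -/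
def DCellVertex (n : ℕ) : ℕ → Type
  | 0 => Fin n
  | m + 1 => Fin (tcell n m + 1) × DCellVertex n m

/-- The numerical identifier `x_0 + Σ_{j=1}^{m} x_j · t_{j-1,n}` of a vertex of `D_{m,n}`. -/
def DCellCode (n : ℕ) : (m : ℕ) → DCellVertex n m → ℕ
  | 0, x => Fin.val x
  | m + 1, x => DCellCode n m x.2 + (Fin.val x.1) * tcell n m

/-- The `m`-dimensional DCell with `n`-port switches `D_{m,n}`. -/
def DCell (n : ℕ) : (m : ℕ) → SimpleGraph (DCellVertex n m)
  | 0 => (⊤ : SimpleGraph (Fin n))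
  | m + 1 => SimpleGraph.fromRel (fun u v =>
      (u.1 = v.1 ∧ (DCell n m).Adj u.2 v.2) ∨
      ((u.1 : ℕ) < (v.1 : ℕ) ∧ (u.1 : ℕ) = DCellCode n m v.2 ∧
        (v.1 : ℕ) = DCellCode n m u.2 + 1))

section DCellProof
variable {n : ℕ}

/-! ## Basic infrastructure -/

open Classical in
noncomputable instance : ∀ m, Fintype (DCellVertex n m)
  | 0 => inferInstanceAs (Fintype (Fin n))
  | m + 1 => @instFintypeProd _ _ _ (instFintypeDCellVertex m)

lemma tcell_pos (hn : 1 ≤ n) : ∀ m, 0 < tcell n m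
  | 0 => hn
  | m + 1 => Nat.mul_pos (tcell_pos hn m) (Nat.succ_pos _)

lemma n_le_tcell (m : ℕ) : n ≤ tcell n m := by
  induction m with
  | zero => exact le_refl n
  | succ m ih =>
    calc n ≤ tcell n m := ih
    _ ≤ tcell n m * (tcell n m + 1) := Nat.le_mul_of_pos_right _ (Nat.succ_pos _)
    _ = tcell n (m+1) := rfl

lemma card_dcellVertex : ∀ m, Fintype.card (DCellVertex n m) = tcell n m
  | 0 => by rw [← Nat.card_eq_fintype_card]; simp [DCellVertex, tcell]
  | m + 1 => by
      show Fintype.card (Fin (tcell n m + 1) × DCellVertex n m) = _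
      rw [Fintype.card_prod, card_dcellVertex m, Fintype.card_fin, tcell, Nat.mul_comm]

lemma dcellCode_lt (hn : 1 ≤ n) : ∀ m (x : DCellVertex n m), DCellCode n m x < tcell n m
  | 0, x => x.2
  | m + 1, x => by
      show DCellCode n m x.2 + (x.1 : ℕ) * tcell n m < tcell n m * (tcell n m + 1)
      have h1 := dcellCode_lt hn m x.2
      have h2 : (x.1 : ℕ) ≤ tcell n m := Nat.lt_succ_iff.mp x.1.2
      calc DCellCode n m x.2 + (x.1 : ℕ) * tcell n m
          < tcell n m + tcell n m * tcell n m := by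
            have := Nat.mul_le_mul_right (tcell n m) h2
            omega
        _ = tcell n m * (tcell n m + 1) := by ring

lemma dcellCode_injective (hn : 1 ≤ n) :
    ∀ m (x y : DCellVertex n m), DCellCode n m x = DCellCode n m y → x = y
  | 0, x, y, h => Fin.val_injective h
  | m + 1, x, y, h => by
      have hx := dcellCode_lt hn m x.2
      have hy := dcellCode_lt hn m y.2
      have h' : DCellCode n m x.2 + (x.1 : ℕ) * tcell n m
          = DCellCode n m y.2 + (y.1 : ℕ) * tcell n m := h
      have h1 : (x.1 : ℕ) = (y.1 : ℕ) := by
        rcases Nat.lt_trichotomy (x.1 : ℕ) (y.1 : ℕ) with hl | he | hl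
        · exfalso; nlinarith [Nat.succ_le_of_lt hl, Nat.mul_le_mul_right (tcell n m) (Nat.succ_le_of_lt hl)]
        · exact he
        · exfalso; nlinarith [Nat.mul_le_mul_right (tcell n m) (Nat.succ_le_of_lt hl)]
      have h2 : DCellCode n m x.2 = DCellCode n m y.2 := by rw [h1] at h'; omega
      have := dcellCode_injective hn m x.2 y.2 h2
      exact Prod.ext (Fin.val_injective h1) this

/-- Inverse of `DCellCode`. -/
def dcellDecode (n : ℕ) (hn : 1 ≤ n) : ∀ m, ℕ → DCellVertex n m
  | 0, k => ⟨k % n, Nat.mod_lt _ hn⟩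
  | m + 1, k => (⟨(k % tcell n (m+1)) / tcell n m, by
        have ht := tcell_pos hn m
        have : k % tcell n (m+1) < tcell n (m+1) := Nat.mod_lt _ (tcell_pos hn (m+1))
        have : k % tcell n (m+1) < tcell n m * (tcell n m + 1) := this
        exact Nat.div_lt_of_lt_mul (by omega)⟩,
      dcellDecode n hn m ((k % tcell n (m+1)) % tcell n m))

lemma dcellCode_decode (hn : 1 ≤ n) :
    ∀ m (k : ℕ), k < tcell n m → DCellCode n m (dcellDecode n hn m k) = k
  | 0, k, hk => by
      have hk' : k < n := hk
      simp [dcellDecode, DCellCode, Nat.mod_eq_of_lt hk']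
  | m + 1, k, hk => by
      have ht := tcell_pos hn m
      show DCellCode n m (dcellDecode n hn m ((k % tcell n (m+1)) % tcell n m))
          + ((k % tcell n (m+1)) / tcell n m) * tcell n m = k
      rw [Nat.mod_eq_of_lt hk]
      rw [dcellCode_decode hn m _ (Nat.mod_lt _ ht)]
      rw [Nat.mod_add_div' k (tcell n m)]
/-! ## Adjacency structure of DCell -/

/-- The cross relation at the top level. -/
def Cross (n m : ℕ) (u v : DCellVertex n (m+1)) : Prop :=
  (u.1 : ℕ) < (v.1 : ℕ) ∧ (u.1 : ℕ) = DCellCode n m v.2 ∧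
    (v.1 : ℕ) = DCellCode n m u.2 + 1

lemma dcell_zero_adj {u v : DCellVertex n 0} : (DCell n 0).Adj u v ↔ u ≠ v := by
  show (⊤ : SimpleGraph (Fin n)).Adj u v ↔ u ≠ v
  exact Iff.rfl

lemma dcell_succ_adj {m : ℕ} {u v : DCellVertex n (m+1)} :
    (DCell n (m+1)).Adj u v ↔
      (u.1 = v.1 ∧ (DCell n m).Adj u.2 v.2) ∨ Cross n m u v ∨ Cross n m v u := by
  show (SimpleGraph.fromRel _).Adj u v ↔ _
  rw [SimpleGraph.fromRel_adj]
  constructor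
  · rintro ⟨hne, h | h⟩
    · rcases h with h | h
      · exact Or.inl h
      · exact Or.inr (Or.inl h)
    · rcases h with ⟨h1, h2⟩ | h
      · exact Or.inl ⟨h1.symm, h2.symm⟩
      · exact Or.inr (Or.inr h)
  · rintro (⟨h1, h2⟩ | h | h)
    · refine ⟨?_, Or.inl (Or.inl ⟨h1, h2⟩)⟩
      intro he; rw [he] at h2; exact (DCell n m).loopless.irrefl _ h2
    · refine ⟨?_, Or.inl (Or.inr h)⟩
      intro he; rw [he] at h; exact absurd h.1 (lt_irrefl _)
    · refine ⟨?_, Or.inr (Or.inr h)⟩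
      intro he; rw [he] at h; exact absurd h.1 (lt_irrefl _)

lemma adj_lift {m : ℕ} {a b : DCellVertex n m} (i : Fin (tcell n m + 1))
    (h : (DCell n m).Adj a b) :
    (DCell n (m+1)).Adj ((i, a) : DCellVertex n (m+1)) (i, b) :=
  dcell_succ_adj.mpr (Or.inl ⟨rfl, h⟩)

lemma adj_snd {m : ℕ} {u v : DCellVertex n (m+1)} (h : (DCell n (m+1)).Adj u v)
    (he : u.1 = v.1) : (DCell n m).Adj u.2 v.2 := by
  rcases dcell_succ_adj.mp h with ⟨_, h2⟩ | h | h
  · exact h2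
  · exact absurd (he ▸ h.1) (by simp)
  · exact absurd (he ▸ h.1) (by simp)

lemma adj_fst_ne_cross {m : ℕ} {u v : DCellVertex n (m+1)} (h : (DCell n (m+1)).Adj u v)
    (he : u.1 ≠ v.1) : Cross n m u v ∨ Cross n m v u := by
  rcases dcell_succ_adj.mp h with ⟨h1, _⟩ | h | h
  · exact absurd h1 he
  · exact Or.inl h
  · exact Or.inr h

/-- The unique cross neighbour of a vertex at the top level. -/
def dcellPartner (hn : 1 ≤ n) {m : ℕ} (u : DCellVertex n (m+1)) : DCellVertex n (m+1) :=
  if h : (u.1 : ℕ) ≤ DCellCode n m u.2 then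
    (⟨DCellCode n m u.2 + 1, by have := dcellCode_lt hn m u.2; omega⟩,
      dcellDecode n hn m (u.1 : ℕ))
  else
    (⟨DCellCode n m u.2, by have := dcellCode_lt hn m u.2; omega⟩,
      dcellDecode n hn m ((u.1 : ℕ) - 1))

lemma dcellPartner_pos (hn : 1 ≤ n) {m : ℕ} (u : DCellVertex n (m+1))
    (h : (u.1 : ℕ) ≤ DCellCode n m u.2) :
    dcellPartner hn u = ((⟨DCellCode n m u.2 + 1, by have := dcellCode_lt hn m u.2; omega⟩,
      dcellDecode n hn m (u.1 : ℕ)) : DCellVertex n (m+1)) := dif_pos h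

lemma dcellPartner_neg (hn : 1 ≤ n) {m : ℕ} (u : DCellVertex n (m+1))
    (h : ¬ (u.1 : ℕ) ≤ DCellCode n m u.2) :
    dcellPartner hn u = ((⟨DCellCode n m u.2, by have := dcellCode_lt hn m u.2; omega⟩,
      dcellDecode n hn m ((u.1 : ℕ) - 1)) : DCellVertex n (m+1)) := dif_neg h

lemma dcellPartner_fst_ne (hn : 1 ≤ n) {m : ℕ} (u : DCellVertex n (m+1)) :
    (dcellPartner hn u).1 ≠ u.1 := by
  by_cases h : (u.1 : ℕ) ≤ DCellCode n m u.2
  · rw [dcellPartner_pos hn u h]; intro h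
    have := congrArg Fin.val h
    simp at this; omega
  · rw [dcellPartner_neg hn u h]; intro h
    have := congrArg Fin.val h
    simp at this; omega

lemma dcellPartner_adj (hn : 1 ≤ n) {m : ℕ} (u : DCellVertex n (m+1)) :
    (DCell n (m+1)).Adj u (dcellPartner hn u) := by
  rw [dcell_succ_adj]
  by_cases h : (u.1 : ℕ) ≤ DCellCode n m u.2
  · rw [dcellPartner_pos hn u h]
    refine Or.inr (Or.inl ⟨?_, ?_, ?_⟩)
    · simp; omega
    · simp only
      rw [dcellCode_decode hn m _ ?_]
      have := dcellCode_lt hn m u.2; omega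
    · simp
  · rw [dcellPartner_neg hn u h]
    push_neg at h
    refine Or.inr (Or.inr ⟨?_, ?_, ?_⟩)
    · simp; omega
    · simp
    · simp only
      rw [dcellCode_decode hn m _ ?_]
      · omega
      · have := dcellCode_lt hn m u.2; omega

/-- Uniqueness of the cross neighbour. -/
lemma cross_neighbor_unique (hn : 1 ≤ n) {m : ℕ} {u v w : DCellVertex n (m+1)}
    (huv : (DCell n (m+1)).Adj u v) (h1 : u.1 ≠ v.1)
    (huw : (DCell n (m+1)).Adj u w) (h2 : u.1 ≠ w.1) : v = w := by
  rcases adj_fst_ne_cross huv h1 with hc1 | hc1 <;>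
    rcases adj_fst_ne_cross huw h2 with hc2 | hc2
  · obtain ⟨ha1, ha2, ha3⟩ := hc1; obtain ⟨hb1, hb2, hb3⟩ := hc2
    have hfst : v.1 = w.1 := Fin.val_injective (by omega)
    have hsnd : v.2 = w.2 := dcellCode_injective hn m _ _ (by omega)
    exact Prod.ext hfst hsnd
  · obtain ⟨ha1, ha2, ha3⟩ := hc1; obtain ⟨hb1, hb2, hb3⟩ := hc2
    omega
  · obtain ⟨ha1, ha2, ha3⟩ := hc1; obtain ⟨hb1, hb2, hb3⟩ := hc2
    omega
  · obtain ⟨ha1, ha2, ha3⟩ := hc1; obtain ⟨hb1, hb2, hb3⟩ := hc2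
    have hfst : v.1 = w.1 := Fin.val_injective (by omega)
    have hsnd : v.2 = w.2 := dcellCode_injective hn m _ _ (by omega)
    exact Prod.ext hfst hsnd

lemma eq_dcellPartner_of_adj (hn : 1 ≤ n) {m : ℕ} {u v : DCellVertex n (m+1)}
    (huv : (DCell n (m+1)).Adj u v) (h1 : u.1 ≠ v.1) : v = dcellPartner hn u :=
  cross_neighbor_unique hn huv h1 (dcellPartner_adj hn u) (dcellPartner_fst_ne hn u).symm ▸ rfl

/-- There is at most one cross edge between two fixed cells. -/
lemma cross_edge_unique (hn : 1 ≤ n) {m : ℕ} {u v u' v' : DCellVertex n (m+1)}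
    (huv : (DCell n (m+1)).Adj u v) (h1 : u.1 ≠ v.1)
    (huv' : (DCell n (m+1)).Adj u' v') (hu : u.1 = u'.1) (hv : v.1 = v'.1) :
    u = u' ∧ v = v' := by
  have h1' : u'.1 ≠ v'.1 := hu ▸ hv ▸ h1
  rcases adj_fst_ne_cross huv h1 with hc | hc <;>
    rcases adj_fst_ne_cross huv' h1' with hc' | hc'
  · obtain ⟨ha1, ha2, ha3⟩ := hc; obtain ⟨hb1, hb2, hb3⟩ := hc'
    have h2 : u.2 = u'.2 := dcellCode_injective hn m _ _ (by
      have := congrArg Fin.val hv; omega)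
    have h3 : v.2 = v'.2 := dcellCode_injective hn m _ _ (by
      have := congrArg Fin.val hu; omega)
    exact ⟨Prod.ext hu h2, Prod.ext hv h3⟩
  · obtain ⟨ha1, ha2, ha3⟩ := hc; obtain ⟨hb1, hb2, hb3⟩ := hc'
    have h4 := congrArg Fin.val hu; have h5 := congrArg Fin.val hv; omega
  · obtain ⟨ha1, ha2, ha3⟩ := hc; obtain ⟨hb1, hb2, hb3⟩ := hc'
    have h4 := congrArg Fin.val hu; have h5 := congrArg Fin.val hv; omega
  · obtain ⟨ha1, ha2, ha3⟩ := hc; obtain ⟨hb1, hb2, hb3⟩ := hc'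
    have h2 : u.2 = u'.2 := dcellCode_injective hn m _ _ (by
      have := congrArg Fin.val hv; omega)
    have h3 : v.2 = v'.2 := dcellCode_injective hn m _ _ (by
      have := congrArg Fin.val hu; omega)
    exact ⟨Prod.ext hu h2, Prod.ext hv h3⟩

/-- There is a cross edge between any two distinct cells. -/
lemma exists_cross_edge (hn : 1 ≤ n) {m : ℕ} {i j : Fin (tcell n m + 1)} (hij : i ≠ j) :
    ∃ u v : DCellVertex n (m+1), u.1 = i ∧ v.1 = j ∧ (DCell n (m+1)).Adj u v := by
  rcases Ne.lt_or_gt (fun h => hij (Fin.val_injective h) :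
      ((i : ℕ) ≠ (j : ℕ))) with h | h
  · -- i < j : u := (i, decode (j-1))
    refine ⟨(i, dcellDecode n hn m ((j : ℕ) - 1)), _, rfl, ?_, dcellPartner_adj hn _⟩
    have hj : (j : ℕ) - 1 < tcell n m := by omega
    have hcode : DCellCode n m (dcellDecode n hn m ((j : ℕ) - 1)) = (j : ℕ) - 1 :=
      dcellCode_decode hn m _ hj
    rw [dcellPartner_pos hn (i, dcellDecode n hn m ((j : ℕ) - 1)) (by simp only [hcode]; omega)]
    apply Fin.val_injective
    simp only [hcode]; omega
  · -- j < i : u := (i, decode j)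
    refine ⟨(i, dcellDecode n hn m (j : ℕ)), _, rfl, ?_, dcellPartner_adj hn _⟩
    have hj : (j : ℕ) < tcell n m := by omega
    have hcode : DCellCode n m (dcellDecode n hn m (j : ℕ)) = (j : ℕ) :=
      dcellCode_decode hn m _ hj
    rw [dcellPartner_neg hn (i, dcellDecode n hn m (j : ℕ)) (by simp only [hcode]; omega)]
    apply Fin.val_injective
    simp only [hcode]
/-! ## Cliques, cells and cut-vertex bookkeeping -/

lemma mem_cutVerts {V : Type*} {G : SimpleGraph V} {F : Finset G.Subgraph} {v : V} :
    v ∈ SimpleGraph.cutVerts F ↔ ∃ A ∈ F, v ∈ A.verts := by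
  simp [SimpleGraph.cutVerts]

lemma cutVerts_insert {V : Type*} {G : SimpleGraph V} [DecidableEq G.Subgraph]
    {F : Finset G.Subgraph} {A : G.Subgraph} :
    SimpleGraph.cutVerts (insert A F) = A.verts ∪ SimpleGraph.cutVerts F := by
  ext v; simp [mem_cutVerts, or_and_right, exists_or]

lemma cutVerts_ncard_le {V : Type*} [Fintype V] {G : SimpleGraph V} {s : ℕ}
    (F : Finset G.Subgraph) : (∀ A ∈ F, A.verts.ncard ≤ s) →
    (SimpleGraph.cutVerts F).ncard ≤ s * F.card := by
  classical
  induction F using Finset.induction_on with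
  | empty => intro _; simp [SimpleGraph.cutVerts]
  | @insert A F' hA ih =>
    intro h
    rw [cutVerts_insert, Finset.card_insert_of_notMem hA]
    calc (A.verts ∪ SimpleGraph.cutVerts F').ncard
        ≤ A.verts.ncard + (SimpleGraph.cutVerts F').ncard := Set.ncard_union_le _ _
      _ ≤ s + s * F'.card := by
          have h1 := ih (fun B hB => h B (Finset.mem_insert_of_mem hB))
          have h2 := h A (Finset.mem_insert_self A F')
          omega
      _ = s * (F'.card + 1) := by ring

section CliqueFacts

variable {V : Type*} {G : SimpleGraph V} {s : ℕ} {A : G.Subgraph}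

lemma clique_verts_ncard (e : A.coe ≃g (⊤ : SimpleGraph (Fin s))) : A.verts.ncard = s := by
  have : Nat.card A.verts = s := by
    rw [Nat.card_eq_of_equiv_fin (e.toEquiv.trans (Equiv.refl _))]
  rwa [Nat.card_coe_set_eq] at this

lemma clique_adj (e : A.coe ≃g (⊤ : SimpleGraph (Fin s))) {u v : V} (hu : u ∈ A.verts)
    (hv : v ∈ A.verts) (huv : u ≠ v) : A.Adj u v := by
  have h : A.coe.Adj ⟨u, hu⟩ ⟨v, hv⟩ := by
    rw [← e.map_rel_iff]
    simp only [SimpleGraph.top_adj]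
    intro hcon
    exact huv (congrArg Subtype.val (e.toEquiv.injective hcon))
  exact h

lemma clique_third (hs : 3 ≤ s) (e : A.coe ≃g (⊤ : SimpleGraph (Fin s))) {u v : V}
    (hu : u ∈ A.verts) (hv : v ∈ A.verts) :
    ∃ w ∈ A.verts, w ≠ u ∧ w ≠ v := by
  classical
  have hcard : 1 ≤ (Finset.univ \ {e.toEquiv ⟨u, hu⟩, e.toEquiv ⟨v, hv⟩} : Finset (Fin s)).card := by
    have h1 : ({e.toEquiv ⟨u, hu⟩, e.toEquiv ⟨v, hv⟩} : Finset (Fin s)).card ≤ 2 :=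
      Finset.card_insert_le _ _ |>.trans (by simp)
    have := Finset.le_card_sdiff ({e.toEquiv ⟨u, hu⟩, e.toEquiv ⟨v, hv⟩} : Finset (Fin s)) Finset.univ
    simp only [Finset.card_univ, Fintype.card_fin] at this ⊢
    omega
  obtain ⟨c, hc⟩ := Finset.card_pos.mp hcard
  simp only [Finset.mem_sdiff, Finset.mem_insert, Finset.mem_singleton] at hc
  refine ⟨(e.toEquiv.symm c : A.verts), (e.toEquiv.symm c).2, ?_, ?_⟩
  · intro hh
    exact hc.2 (Or.inl (by
      simpa using (congrArg e.toEquiv (Subtype.ext hh : e.toEquiv.symm c = ⟨u, hu⟩))))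
  · intro hh
    exact hc.2 (Or.inr (by
      simpa using (congrArg e.toEquiv (Subtype.ext hh : e.toEquiv.symm c = ⟨v, hv⟩))))

end CliqueFacts

/-- Every clique of size `≥ 3` in `DCell n (m+1)` lies inside a single cell. -/
lemma clique_in_cell {n m s : ℕ} (hn : 1 ≤ n) (hs : 3 ≤ s)
    {A : (DCell n (m+1)).Subgraph} (e : A.coe ≃g (⊤ : SimpleGraph (Fin s)))
    {u v : DCellVertex n (m+1)} (hu : u ∈ A.verts) (hv : v ∈ A.verts) : u.1 = v.1 := by
  by_contra hne
  have huv : u ≠ v := fun h => hne (congrArg Prod.fst h)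
  have hadj : (DCell n (m+1)).Adj u v := (clique_adj e hu hv huv).adj_sub
  obtain ⟨w, hw, hwu, hwv⟩ := clique_third hs e hu hv
  by_cases hwu1 : w.1 = u.1
  · -- w and v are both cross neighbours of v? No: w, u cross neighbours of v
    have hwv1 : w.1 ≠ v.1 := hwu1 ▸ hne
    have hadj2 : (DCell n (m+1)).Adj v w := (clique_adj e hv hw (Ne.symm hwv)).adj_sub
    have hadj1 : (DCell n (m+1)).Adj v u := hadj.symm
    have := cross_neighbor_unique hn hadj1 (Ne.symm hne) hadj2 (Ne.symm hwv1)
    exact hwu this.symm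
  · -- w and v are both cross neighbours of u
    have hadj2 : (DCell n (m+1)).Adj u w := (clique_adj e hu hw (Ne.symm hwu)).adj_sub
    have := cross_neighbor_unique hn hadj hne hadj2 (Ne.symm hwu1)
    exact hwv this.symm

/-- Restriction of a subgraph of `DCell n (m+1)` to the cell `i`. -/
def restrictCell {n m : ℕ} (i : Fin (tcell n m + 1)) (A : (DCell n (m+1)).Subgraph) :
    (DCell n m).Subgraph where
  verts := {a | ((i, a) : DCellVertex n (m+1)) ∈ A.verts}
  Adj a b := A.Adj (i, a) (i, b)
  adj_sub h := adj_snd h.adj_sub rfl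
  edge_vert h := A.edge_vert h
  symm := ⟨fun a b h => A.symm.symm _ _ h⟩

lemma restrictCell_coe_iso {n m : ℕ} (i : Fin (tcell n m + 1))
    (A : (DCell n (m+1)).Subgraph) (hA : ∀ u ∈ A.verts, u.1 = i) :
    Nonempty ((restrictCell i A).coe ≃g A.coe) := by
  refine ⟨⟨⟨fun a => ⟨(i, a.1), a.2⟩, fun u => ⟨u.1.2, ?_⟩, ?_, ?_⟩, ?_⟩⟩
  · show ((i, u.1.2) : DCellVertex n (m+1)) ∈ A.verts
    have : ((i, u.1.2) : DCellVertex n (m+1)) = u.1 := Prod.ext (hA u.1 u.2).symm rfl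
    rw [this]; exact u.2
  · intro a; rfl
  · intro u; exact Subtype.ext (Prod.ext (hA u.1 u.2).symm rfl)
  · exact Iff.rfl
/-! ## Arithmetic facts -/

lemma B_pos (hn : 2 ≤ n) (hs : 1 ≤ s) : 1 ≤ (n + s - 2) / s := by
  rw [Nat.le_div_iff_mul_le (by omega)]; omega

lemma sB_le {s : ℕ} : s * ((n + s - 2) / s) ≤ n + s - 2 := by
  calc s * ((n + s - 2) / s) = (n + s - 2) / s * s := Nat.mul_comm _ _
    _ ≤ n + s - 2 := Nat.div_mul_le_self _ _

lemma s_le_tcell {s : ℕ} (hn : 2 ≤ n) (hs2 : s ≤ n - 1) (m : ℕ) : s + 1 ≤ tcell n m :=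
  le_trans (by omega) (n_le_tcell m)

lemma tcell_sq_le {m : ℕ} (hn : 1 ≤ n) : tcell n m + tcell n m ≤ tcell n (m+1) := by
  show tcell n m + tcell n m ≤ tcell n m * (tcell n m + 1)
  have h := tcell_pos hn m
  nlinarith

lemma tcell_GT {s : ℕ} (hn : 2 ≤ n) (hs1 : 3 ≤ s) (hs2 : s ≤ n - 1) :
    ∀ m, s * ((n + s - 2) / s + m) + 2 ≤ tcell n m + s := by
  intro m
  induction m with
  | zero =>
    have h := sB_le (n := n) (s := s)
    have e0 : s * ((n + s - 2) / s + 0) = s * ((n + s - 2) / s) := by ring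
    show s * ((n + s - 2) / s + 0) + 2 ≤ n + s
    omega
  | succ m ih =>
    have e1 : s * ((n + s - 2) / s + (m + 1)) = s * ((n + s - 2) / s + m) + s :=
      by ring
    have e2 := tcell_sq_le (m := m) (by omega : 1 ≤ n)
    have e3 := s_le_tcell hn hs2 m
    omega

lemma tcell_GT2 {s : ℕ} (hn : 2 ≤ n) (hs1 : 3 ≤ s) (hs2 : s ≤ n - 1) :
    ∀ m, 1 ≤ m → s * ((n + s - 2) / s + m) + 2 ≤ tcell n m := by
  intro m
  induction m with
  | zero => omega
  | succ m ih =>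
    intro _
    rcases Nat.eq_zero_or_pos m with hm | hm
    · subst hm
      have h := sB_le (n := n) (s := s)
      have e1 : s * ((n + s - 2) / s + 1) = s * ((n + s - 2) / s) + s := by ring
      have h2 : s + 1 ≤ n := by omega
      have hnn : 3 * n ≤ n * (n + 1) + 2 := by nlinarith
      show _ ≤ tcell n 0 * (tcell n 0 + 1)
      show s * ((n + s - 2) / s + (0 + 1)) + 2 ≤ n * (n + 1)
      have e2 : s * ((n + s - 2) / s + (0 + 1)) = s * ((n + s - 2) / s) + s := by ring
      omega
    · have ih' := ih hm
      have e1 : s * ((n + s - 2) / s + (m + 1)) = s * ((n + s - 2) / s + m) + s :=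
        by ring
      have e2 := tcell_sq_le (m := m) (by omega : 1 ≤ n)
      have e3 := s_le_tcell hn hs2 m
      omega

lemma prod_lb {a b N : ℕ} (ha : 2 ≤ a) (hb : 2 ≤ b) (hab : a + b = N + 1) :
    2 * (N - 1) ≤ a * b := by
  obtain ⟨c, rfl⟩ : ∃ c, a = c + 2 := ⟨a - 2, by omega⟩
  obtain ⟨d, rfl⟩ : ∃ d, b = d + 2 := ⟨b - 2, by omega⟩
  have h : (c + 2) * (d + 2) = c * d + 2 * c + 2 * d + 4 := by ring
  omega
/-! ## Lifting reachability from a cell into the big graph -/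

lemma reach_lift {m : ℕ} (i : Fin (tcell n m + 1)) {Ws : Set (DCellVertex n m)}
    {W : Set (DCellVertex n (m+1))} (h : ∀ a ∈ Ws, ((i, a) : DCellVertex n (m+1)) ∈ W)
    {a b : Ws} (hr : ((DCell n m).induce Ws).Reachable a b) :
    ((DCell n (m+1)).induce W).Reachable ⟨(i, a.1), h a.1 a.2⟩ ⟨(i, b.1), h b.1 b.2⟩ := by
  let f : ((DCell n m).induce Ws) →g ((DCell n (m+1)).induce W) :=
    ⟨fun p => ⟨(i, p.1), h p.1 p.2⟩, fun hadj => adj_lift i hadj⟩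
  exact hr.map f

/-! ## The main induction -/

lemma dcell_main {n s : ℕ} (hn : 2 ≤ n) (hs1 : 3 ≤ s) (hs2 : s ≤ n - 1) :
    ∀ (m : ℕ) (F : Finset (DCell n m).Subgraph),
      (∀ A ∈ F, Nonempty (A.coe ≃g (⊤ : SimpleGraph (Fin s)))) →
      F.card + 1 ≤ (n + s - 2) / s + m →
      ((DCell n m).induce (SimpleGraph.cutVerts F)ᶜ).Connected ∧
        2 ≤ ((SimpleGraph.cutVerts F)ᶜ : Set (DCellVertex n m)).ncard := by
  have hn1 : 1 ≤ n := by omega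
  have hsn : s + 1 ≤ n := by omega
  intro m
  induction m with
  | zero =>
    intro F hC hcard
    have hncards : ∀ A ∈ F, A.verts.ncard ≤ s := fun A hA =>
      le_of_eq (clique_verts_ncard (hC A hA).some)
    have hcut : (SimpleGraph.cutVerts F).ncard ≤ s * F.card :=
      cutVerts_ncard_le F hncards
    have hsF : s * F.card ≤ n - 2 := by
      have h1 : F.card + 1 ≤ (n + s - 2) / s := by simpa using hcard
      have h2 : s * (F.card + 1) ≤ s * ((n + s - 2) / s) := Nat.mul_le_mul_left s h1
      have h3 := sB_le (n := n) (s := s)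
      have h4 : s * (F.card + 1) = s * F.card + s := by ring
      omega
    have hWcard : 2 ≤ ((SimpleGraph.cutVerts F)ᶜ : Set (DCellVertex n 0)).ncard := by
      have h5 := Set.ncard_add_ncard_compl (SimpleGraph.cutVerts F)
      have h6 : Nat.card (DCellVertex n 0) = n := by
        rw [Nat.card_eq_fintype_card, card_dcellVertex]; rfl
      omega
    have hne : ((SimpleGraph.cutVerts F)ᶜ : Set (DCellVertex n 0)).Nonempty := by
      apply Set.nonempty_of_ncard_ne_zero; omega
    haveI := hne.to_subtype
    refine ⟨⟨?_⟩, hWcard⟩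
    intro x y
    by_cases hxy : x = y
    · rw [hxy]
    · have : (DCell n 0).Adj x.1 y.1 :=
        dcell_zero_adj.mpr (fun h => hxy (Subtype.ext h))
      exact SimpleGraph.Adj.reachable this
  | succ m IH =>
    intro F hC hcard
    classical
    set B := (n + s - 2) / s with hB
    have hB1 : 1 ≤ B := B_pos hn (by omega)
    have hFcard : F.card ≤ B + m := by omega
    set W := ((SimpleGraph.cutVerts F)ᶜ : Set (DCellVertex n (m+1))) with hWdef
    -- each clique lies in a single cell
    have hvertsn : ∀ A ∈ F, A.verts.ncard = s := fun A hA =>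
      clique_verts_ncard (hC A hA).some
    have hvne : ∀ A ∈ F, A.verts.Nonempty := fun A hA => by
      apply Set.nonempty_of_ncard_ne_zero; rw [hvertsn A hA]; omega
    have hloc : ∀ A ∈ F, ∀ u ∈ A.verts, ∀ v ∈ A.verts,
        (u : DCellVertex n (m+1)).1 = (v : DCellVertex n (m+1)).1 := by
      intro A hA u hu v hv
      exact clique_in_cell hn1 hs1 (hC A hA).some hu hv
    -- the cliques belonging to each cell
    set Fi : Fin (tcell n m + 1) → Finset ((DCell n (m+1)).Subgraph) :=
      fun i => F.filter (fun A => ∀ u ∈ A.verts, (u : DCellVertex n (m+1)).1 = i)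
      with hFi
    set Gi : Fin (tcell n m + 1) → Finset ((DCell n m).Subgraph) :=
      fun i => (Fi i).image (restrictCell i) with hGi
    have hGicard : ∀ i, (Gi i).card ≤ (Fi i).card := fun i => Finset.card_image_le
    have hGiclique : ∀ i, ∀ A' ∈ Gi i,
        Nonempty (A'.coe ≃g (⊤ : SimpleGraph (Fin s))) := by
      intro i A' hA'
      obtain ⟨A, hA, rfl⟩ := Finset.mem_image.mp hA'
      obtain ⟨hAF, hcell⟩ := Finset.mem_filter.mp hA
      obtain ⟨e1⟩ := restrictCell_coe_iso i A hcell
      obtain ⟨e2⟩ := hC A hAF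
      exact ⟨e1.trans e2⟩
    -- membership correspondence
    have hWmem : ∀ (i : Fin (tcell n m + 1)) (a : DCellVertex n m),
        (((i, a) : DCellVertex n (m+1)) ∈ W) ↔
          a ∈ (SimpleGraph.cutVerts (Gi i))ᶜ := by
      intro i a
      constructor
      · intro h ha
        apply h
        obtain ⟨A', hA', haA⟩ := mem_cutVerts.mp ha
        obtain ⟨A, hA, rfl⟩ := Finset.mem_image.mp hA'
        obtain ⟨hAF, hcell⟩ := Finset.mem_filter.mp hA
        exact mem_cutVerts.mpr ⟨A, hAF, haA⟩
      · intro h hmem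
        apply h
        obtain ⟨A, hAF, haA⟩ := mem_cutVerts.mp hmem
        have hcell : ∀ u ∈ A.verts, (u : DCellVertex n (m+1)).1 = i := by
          intro u hu
          have := hloc A hAF u hu (i, a) haA
          exact this
        refine mem_cutVerts.mpr ⟨restrictCell i A, ?_, haA⟩
        exact Finset.mem_image.mpr ⟨A, Finset.mem_filter.mpr ⟨hAF, hcell⟩, rfl⟩
    -- reach within a good cell
    have hreach_cell : ∀ (z z' : DCellVertex n (m+1)) (hz : z ∈ W) (hz' : z' ∈ W),
        z.1 = z'.1 → (Fi z.1).card + 1 ≤ B + m →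
        ((DCell n (m+1)).induce W).Reachable ⟨z, hz⟩ ⟨z', hz'⟩ := by
      rintro ⟨z1, z2⟩ ⟨z1', z2'⟩ hz hz' h1 hgd
      simp only at h1
      subst h1
      have hgd' : (Fi z1).card + 1 ≤ B + m := hgd
      obtain ⟨hconn, -⟩ := IH (Gi z1) (hGiclique z1)
        (by have := hGicard z1; omega)

      have h2 : z2 ∈ (SimpleGraph.cutVerts (Gi z1))ᶜ := (hWmem z1 z2).mp hz
      have h2' : z2' ∈ (SimpleGraph.cutVerts (Gi z1))ᶜ := (hWmem z1 z2').mp hz'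
      have hmaps : ∀ a ∈ (SimpleGraph.cutVerts (Gi z1))ᶜ,
          ((z1, a) : DCellVertex n (m+1)) ∈ W := fun a ha => (hWmem z1 a).mpr ha
      exact reach_lift z1 hmaps (hconn.preconnected ⟨z2, h2⟩ ⟨z2', h2'⟩)
    have hdec : ∀ k : ℕ, s * k = (s - 1) * k + k := by
      intro k
      have h : s = (s - 1) + 1 := by omega
      conv_lhs => rw [h]
      ring
    -- a survivor's partner, if removed, gives a clique in another cell (isolated cell impossible)
    have hiso : ∀ c : Fin (tcell n m + 1), (Fi c).card + 1 ≤ B + m →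
        (∀ (u : DCellVertex n (m+1)), u.1 = c → u ∈ W →
          dcellPartner hn1 u ∈ SimpleGraph.cutVerts F) → False := by
      intro c hgdc hpart
      set Vc : Set (DCellVertex n m) := (SimpleGraph.cutVerts (Gi c))ᶜ with hVc
      have hex : ∀ a ∈ Vc, ∃ A, A ∈ F ∧
          dcellPartner hn1 ((c, a) : DCellVertex n (m+1)) ∈ A.verts := by
        intro a ha
        have hW' : ((c, a) : DCellVertex n (m+1)) ∈ W := (hWmem c a).mpr ha
        obtain ⟨A, hA, h2⟩ := mem_cutVerts.mp (hpart (c, a) rfl hW')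
        exact ⟨A, hA, h2⟩
      have hnonempty : Nonempty ((DCell n (m+1)).Subgraph) := ⟨⊥⟩
      set f : DCellVertex n m → (DCell n (m+1)).Subgraph := fun a =>
        if h : a ∈ Vc then (hex a h).choose else Classical.arbitrary _ with hf
      have hfspec : ∀ a (h : a ∈ Vc), f a ∈ F ∧
          dcellPartner hn1 ((c, a) : DCellVertex n (m+1)) ∈ (f a).verts := by
        intro a h
        rw [hf]; simp only [dif_pos h]
        exact (hex a h).choose_spec
      have hmaps : ∀ a ∈ Vc, f a ∈ (↑(F \ Fi c) : Set ((DCell n (m+1)).Subgraph)) := by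
        intro a ha
        obtain ⟨hF1, hF2⟩ := hfspec a ha
        refine Finset.mem_coe.mpr (Finset.mem_sdiff.mpr ⟨hF1, fun hFi => ?_⟩)
        have := (Finset.mem_filter.mp hFi).2 _ hF2
        exact dcellPartner_fst_ne hn1 ((c, a) : DCellVertex n (m+1)) this
      have hinj : Set.InjOn f Vc := by
        intro a ha a' ha' hfa
        obtain ⟨hF1, hF2⟩ := hfspec a ha
        obtain ⟨hF1', hF2'⟩ := hfspec a' ha'
        rw [hfa] at hF2
        have hcells : (dcellPartner hn1 ((c, a) : DCellVertex n (m+1))).1 =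
            (dcellPartner hn1 ((c, a') : DCellVertex n (m+1))).1 :=
          hloc (f a') hF1' _ hF2 _ hF2'
        have := cross_edge_unique hn1 (dcellPartner_adj hn1 ((c, a) : DCellVertex n (m+1)))
          (Ne.symm (dcellPartner_fst_ne hn1 _)) (dcellPartner_adj hn1 ((c, a') : DCellVertex n (m+1)))
          rfl hcells
        exact congrArg Prod.snd this.1
      have hvc : Vc.ncard ≤ (F \ Fi c).card := by
        have := Set.ncard_le_ncard_of_injOn f hmaps hinj (Set.toFinite _)
        rwa [Set.ncard_coe_finset] at this
      -- counting
      have hcompl := Set.ncard_add_ncard_compl (SimpleGraph.cutVerts (Gi c))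
      have hcm : Nat.card (DCellVertex n m) = tcell n m := by
        rw [Nat.card_eq_fintype_card, card_dcellVertex]
      have hcc : (SimpleGraph.cutVerts (Gi c)).ncard ≤ s * (Fi c).card := by
        have h1 : (SimpleGraph.cutVerts (Gi c)).ncard ≤ s * (Gi c).card :=
          cutVerts_ncard_le _ (fun A' hA' => le_of_eq (clique_verts_ncard (hGiclique c A' hA').some))
        have h2 : s * (Gi c).card ≤ s * (Fi c).card := Nat.mul_le_mul_left s (hGicard c)
        omega
      have hsd : (F \ Fi c).card + (Fi c).card = F.card :=
        Finset.card_sdiff_add_card_eq_card (Finset.filter_subset _ _)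
      have hGT := tcell_GT hn hs1 hs2 (m := m)
      rw [← hB] at hGT
      have hVceq : Vc.ncard = ((SimpleGraph.cutVerts (Gi c))ᶜ : Set (DCellVertex n m)).ncard := rfl
      -- put it together
      have e1 := hdec ((Fi c).card)
      have e2 := hdec (B + m)
      have e3 : (s - 1) * (Fi c).card ≤ (s - 1) * (B + m - 1) :=
        Nat.mul_le_mul_left _ (by omega)
      have e4 : (s - 1) * (B + m - 1) + (s - 1) = (s - 1) * (B + m) := by
        have h : B + m = (B + m - 1) + 1 := by omega
        conv_rhs => rw [h]
        ring
      omega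
    -- there is an untouched cell, hence at least two survivors
    have huntouched : ∃ j, Fi j = ∅ := by
      by_contra hcon
      push_neg at hcon
      choose g hg using fun i => hcon i
      have hinj : Set.InjOn g (Finset.univ : Finset (Fin (tcell n m + 1))) := by
        intro i _ j _ hij
        obtain ⟨hF1, hc1⟩ := Finset.mem_filter.mp (hg i)
        obtain ⟨hF2, hc2⟩ := Finset.mem_filter.mp (hg j)
        obtain ⟨u, hu⟩ := hvne (g i) hF1
        have e1 : u.1 = i := hc1 u hu
        have e2 : u.1 = j := hc2 u (hij ▸ hu)
        rw [← e1, ← e2]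
      have hle := Finset.card_le_card_of_injOn g
        (fun i _ => (Finset.mem_filter.mp (hg i)).1) hinj
      rw [Finset.card_univ, Fintype.card_fin] at hle
      have e2 := hdec (B + m)
      have e3 : B + m ≤ (s - 1) * (B + m) := Nat.le_mul_of_pos_left _ (by omega)
      have e5 : (s - 1) ≤ (s - 1) * (B + m) := Nat.le_mul_of_pos_right _ (by omega)
      have hGT := tcell_GT hn hs1 hs2 (m := m)
      rw [← hB] at hGT
      omega
    have hW2 : 2 ≤ W.ncard := by
      obtain ⟨j, hj⟩ := huntouched
      have hjW : ∀ a : DCellVertex n m, ((j, a) : DCellVertex n (m+1)) ∈ W := by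
        intro a
        refine (hWmem j a).mpr ?_
        intro hmem
        obtain ⟨A', hA', -⟩ := mem_cutVerts.mp hmem
        rw [hGi] at hA'
        simp only [hj, Finset.image_empty, Finset.notMem_empty] at hA'
      obtain ⟨a, b, hab⟩ := Fintype.exists_pair_of_one_lt_card
        (α := DCellVertex n m) (by rw [card_dcellVertex]; have := n_le_tcell (n := n) m; omega)
      have h2 := (Set.one_lt_ncard (Set.toFinite W)).mpr
        ⟨(j, a), hjW a, (j, b), hjW b, fun h => hab (congrArg Prod.snd h)⟩
      omega
    have hne : W.Nonempty := by apply Set.nonempty_of_ncard_ne_zero; omega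
    haveI := hne.to_subtype
    refine ⟨⟨?_⟩, hW2⟩
    -- preconnected
    rintro ⟨x, hx⟩ ⟨y, hy⟩
    by_cases hall : ∃ i₀, ∀ A ∈ F, ∀ u ∈ A.verts, (u : DCellVertex n (m+1)).1 = i₀
    · -- Case A: all cliques lie in one cell i₀
      obtain ⟨i₀, hi₀⟩ := hall
      have huW : ∀ z : DCellVertex n (m+1), z.1 ≠ i₀ → z ∈ W := by
        intro z hz hzcut
        obtain ⟨A, hA, hzA⟩ := mem_cutVerts.mp hzcut
        exact hz (hi₀ A hA z hzA)
      have hgoodA : ∀ j : Fin (tcell n m + 1), j ≠ i₀ → (Fi j).card + 1 ≤ B + m := by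
        intro j hj
        have hempty : Fi j = ∅ := by
          rw [Finset.eq_empty_iff_forall_notMem]
          intro A hA
          obtain ⟨hAF, hcell⟩ := Finset.mem_filter.mp hA
          obtain ⟨u, hu⟩ := hvne A hAF
          exact hj ((hcell u hu).symm.trans (hi₀ A hAF u hu))
        rw [hempty]
        simp only [Finset.card_empty]
        omega
      have hout : ∀ (z : DCellVertex n (m+1)) (hz : z ∈ W),
          ∃ (w : DCellVertex n (m+1)) (hw : w ∈ W), w.1 ≠ i₀ ∧
            ((DCell n (m+1)).induce W).Reachable ⟨z, hz⟩ ⟨w, hw⟩ := by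
        intro z hz
        by_cases hzc : z.1 = i₀
        · have hp1 : (dcellPartner hn1 z).1 ≠ i₀ := by
            rw [← hzc]; exact dcellPartner_fst_ne hn1 z
          refine ⟨dcellPartner hn1 z, huW _ hp1, hp1, ?_⟩
          exact SimpleGraph.Adj.reachable (dcellPartner_adj hn1 z)
        · exact ⟨z, hz, hzc, by rfl⟩
      obtain ⟨x', hx', hx'1, hrx⟩ := hout x hx
      obtain ⟨y', hy', hy'1, hry⟩ := hout y hy
      refine hrx.trans (SimpleGraph.Reachable.trans ?_ hry.symm)
      by_cases hxy : x'.1 = y'.1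
      · exact hreach_cell x' y' hx' hy' hxy (hgoodA x'.1 hx'1)
      · obtain ⟨u, v, hu1, hv1, hadj⟩ := exists_cross_edge hn1 (m := m) hxy
        have huW' : u ∈ W := huW u (by rw [hu1]; exact hx'1)
        have hvW' : v ∈ W := huW v (by rw [hv1]; exact hy'1)
        have r1 := hreach_cell x' u hx' huW' hu1.symm (hgoodA x'.1 hx'1)
        have r2 : ((DCell n (m+1)).induce W).Reachable ⟨u, huW'⟩ ⟨v, hvW'⟩ :=
          SimpleGraph.Adj.reachable hadj
        have r3 := hreach_cell v y' hvW' hy' hv1 (by rw [hv1]; exact hgoodA y'.1 hy'1)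
        exact r1.trans (r2.trans r3)
    · -- Case B: the cliques do not all lie in one cell
      push_neg at hall
      have hgood : ∀ i, (Fi i).card + 1 ≤ B + m := by
        intro i
        obtain ⟨A, hAF, u, hu, hne⟩ := hall i
        have hAnot : A ∉ Fi i := fun hAi => hne ((Finset.mem_filter.mp hAi).2 u hu)
        have hss : Fi i ⊂ F := ⟨Finset.filter_subset _ _, fun hsub => hAnot (hsub hAF)⟩
        have := Finset.card_lt_card hss
        omega
      set S : Finset (Fin (tcell n m + 1)) := Finset.univ.filter (fun i =>
        ∃ (z : DCellVertex n (m+1)) (hz : z ∈ W), z.1 = i ∧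
          ((DCell n (m+1)).induce W).Reachable ⟨x, hx⟩ ⟨z, hz⟩) with hSdef
      have hxS : x.1 ∈ S := Finset.mem_filter.mpr ⟨Finset.mem_univ _, x, hx, rfl, by rfl⟩
      have hSreach : ∀ i ∈ S, ∀ (z : DCellVertex n (m+1)) (hz : z ∈ W), z.1 = i →
          ((DCell n (m+1)).induce W).Reachable ⟨x, hx⟩ ⟨z, hz⟩ := by
        intro i hi z hz hzi
        obtain ⟨-, z', hz', hz'i, hr⟩ := Finset.mem_filter.mp hi
        exact hr.trans (hreach_cell z' z hz' hz (by rw [hz'i, hzi])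
          (by rw [hz'i]; exact hgood i))
      have hSstep : ∀ i ∈ S, ∀ (u v : DCellVertex n (m+1)), u ∈ W → v ∈ W → u.1 = i →
          (DCell n (m+1)).Adj u v → v.1 ∈ S := by
        intro i hi u v hu hv hui hadj
        exact Finset.mem_filter.mpr ⟨Finset.mem_univ _, v, hv, rfl,
          (hSreach i hi u hu hui).trans (SimpleGraph.Adj.reachable hadj)⟩
      have hyS : y.1 ∈ S := by
        by_contra hyS
        have hkilled : ∀ a ∈ S, ∀ b ∈ Sᶜ, ∀ (u v : DCellVertex n (m+1)),
            u.1 = a → v.1 = b → (DCell n (m+1)).Adj u v →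
            u ∈ SimpleGraph.cutVerts F ∨ v ∈ SimpleGraph.cutVerts F := by
          intro a ha b hb u v hu1 hv1 hadj
          by_contra hcon
          push_neg at hcon
          have hbS : v.1 ∈ S := hSstep a ha u v hcon.1 hcon.2 hu1 hadj
          rw [hv1] at hbS
          exact (Finset.mem_compl.mp hb) hbS
        have hyc : y.1 ∈ Sᶜ := Finset.mem_compl.mpr hyS
        by_cases hS1 : S.card = 1
        · -- the cell of x is isolated
          obtain ⟨c, hc⟩ := Finset.card_eq_one.mp hS1
          have hcS : c ∈ S := by rw [hc]; exact Finset.mem_singleton_self c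
          refine hiso c (hgood c) ?_
          intro u hu1 huW
          have hp1 : (dcellPartner hn1 u).1 ≠ c := by
            rw [← hu1]; exact dcellPartner_fst_ne hn1 u
          have hpS : (dcellPartner hn1 u).1 ∈ Sᶜ := by
            refine Finset.mem_compl.mpr (fun hmem => hp1 ?_)
            rw [hc] at hmem; exact Finset.mem_singleton.mp hmem
          rcases hkilled c hcS _ hpS u (dcellPartner hn1 u) hu1 rfl
            (dcellPartner_adj hn1 u) with h | h
          · exact absurd h huW
          · exact h
        by_cases hSc1 : Sᶜ.card = 1
        · -- the cell of y is isolated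
          obtain ⟨c, hc⟩ := Finset.card_eq_one.mp hSc1
          refine hiso c (hgood c) ?_
          intro u hu1 huW
          have hp1 : (dcellPartner hn1 u).1 ≠ c := by
            rw [← hu1]; exact dcellPartner_fst_ne hn1 u
          have hpS : (dcellPartner hn1 u).1 ∈ S := by
            by_contra hmem
            have := Finset.mem_compl.mpr hmem
            rw [hc] at this
            exact hp1 (Finset.mem_singleton.mp this)
          have hcSc : c ∈ Sᶜ := by rw [hc]; exact Finset.mem_singleton_self c
          rcases hkilled _ hpS c hcSc (dcellPartner hn1 u) u rfl hu1
            (dcellPartner_adj hn1 u).symm with h | h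
          · exact h
          · exact absurd h huW
        -- both sides have at least two cells
        · have hxne : Nonempty (DCellVertex n (m+1)) := ⟨x⟩
          have hpair : ∀ a ∈ S, ∀ b ∈ Sᶜ, ∃ w : DCellVertex n (m+1),
              w ∈ SimpleGraph.cutVerts F ∧
              ((w.1 = a ∧ (dcellPartner hn1 w).1 = b) ∨
                (w.1 = b ∧ (dcellPartner hn1 w).1 = a)) := by
            intro a ha b hb
            have hab : a ≠ b := fun h => (Finset.mem_compl.mp hb) (h ▸ ha)
            obtain ⟨u, v, hu1, hv1, hadj⟩ := exists_cross_edge hn1 hab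
            have hne : u.1 ≠ v.1 := by rw [hu1, hv1]; exact hab
            have hvp : v = dcellPartner hn1 u := eq_dcellPartner_of_adj hn1 hadj hne
            have hup : u = dcellPartner hn1 v :=
              eq_dcellPartner_of_adj hn1 hadj.symm (Ne.symm hne)
            rcases hkilled a ha b hb u v hu1 hv1 hadj with h | h
            · exact ⟨u, h, Or.inl ⟨hu1, by rw [← hvp]; exact hv1⟩⟩
            · exact ⟨v, h, Or.inr ⟨hv1, by rw [← hup]; exact hu1⟩⟩
          choose wf hw1 hw2 using hpair
          set f : Fin (tcell n m + 1) × Fin (tcell n m + 1) → DCellVertex n (m+1) :=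
            fun p => if h : p.1 ∈ S ∧ p.2 ∈ Sᶜ then wf p.1 h.1 p.2 h.2
              else Classical.arbitrary _ with hfdef
          have hmaps : ∀ p ∈ S ×ˢ Sᶜ, f p ∈ (SimpleGraph.cutVerts F).toFinset := by
            intro p hp
            obtain ⟨h1, h2⟩ := Finset.mem_product.mp hp
            rw [hfdef]
            simp only [dif_pos (And.intro h1 h2)]
            exact Set.mem_toFinset.mpr (hw1 p.1 h1 p.2 h2)
          have hinj : Set.InjOn f (↑(S ×ˢ Sᶜ) : Set (Fin (tcell n m + 1) × Fin (tcell n m + 1))) := by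
            intro p hp q hq hfpq
            obtain ⟨hp1, hp2⟩ := Finset.mem_product.mp (Finset.mem_coe.mp hp)
            obtain ⟨hq1, hq2⟩ := Finset.mem_product.mp (Finset.mem_coe.mp hq)
            rw [hfdef] at hfpq
            simp only [dif_pos (And.intro hp1 hp2), dif_pos (And.intro hq1 hq2)] at hfpq
            have h2p := hw2 p.1 hp1 p.2 hp2
            have h2q := hw2 q.1 hq1 q.2 hq2
            rw [hfpq] at h2p
            rcases h2p with ⟨e1, e2⟩ | ⟨e1, e2⟩ <;> rcases h2q with ⟨e3, e4⟩ | ⟨e3, e4⟩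
            · exact Prod.ext (e1.symm.trans e3) (e2.symm.trans e4)
            · exfalso
              rw [← e1] at hp1; rw [← e3] at hq2
              exact (Finset.mem_compl.mp hq2) hp1
            · exfalso
              rw [← e3] at hq1; rw [← e1] at hp2
              exact (Finset.mem_compl.mp hp2) hq1
            · exact Prod.ext (e2.symm.trans e4) (e1.symm.trans e3)
          have hcount := Finset.card_le_card_of_injOn f hmaps hinj
          rw [Finset.card_product] at hcount
          have htot : (SimpleGraph.cutVerts F).toFinset.card
              = (SimpleGraph.cutVerts F).ncard := (Set.ncard_eq_toFinset_card' _).symm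
          have hcut : (SimpleGraph.cutVerts F).ncard ≤ s * F.card :=
            cutVerts_ncard_le F (fun A hA => le_of_eq (hvertsn A hA))
          have hScard : S.card + Sᶜ.card = tcell n m + 1 := by
            rw [Finset.card_compl, Fintype.card_fin]
            have h9 := Finset.card_le_univ S
            rw [Fintype.card_fin] at h9
            omega
          have hS2 : 2 ≤ S.card := by
            have : 0 < S.card := Finset.card_pos.mpr ⟨x.1, hxS⟩
            omega
          have hSc2 : 2 ≤ Sᶜ.card := by
            have : 0 < Sᶜ.card := Finset.card_pos.mpr ⟨y.1, hyc⟩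
            omega
          have hprod := prod_lb hS2 hSc2 hScard
          have hsF : s * F.card ≤ s * (B + m) := Nat.mul_le_mul_left s hFcard
          rcases Nat.eq_zero_or_pos m with hm | hm
          · subst hm
            have hsB : s * B ≤ n + s - 2 := hB ▸ sB_le
            have ht0 : tcell n 0 = n := rfl
            have e0 : s * (B + 0) = s * B := by ring
            omega
          · have hGT2 := tcell_GT2 hn hs1 hs2 m hm
            rw [← hB] at hGT2
            have htp := tcell_pos hn1 m
            omega
      exact hSreach y.1 hyS y hy rfl
/-! ## Existence of a structure cut -/

/-- Complete subgraph on a finite set of mutually adjacent vertices. -/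
def cliqueSub {V : Type*} (G : SimpleGraph V) (T : Finset V)
    (hT : ∀ u ∈ T, ∀ v ∈ T, u ≠ v → G.Adj u v) : G.Subgraph where
  verts := ↑T
  Adj u v := u ∈ T ∧ v ∈ T ∧ u ≠ v
  adj_sub h := hT _ h.1 _ h.2.1 h.2.2
  edge_vert h := h.1
  symm := ⟨fun u v h => ⟨h.2.1, h.1, h.2.2.symm⟩⟩

lemma cliqueSub_iso {V : Type*} {G : SimpleGraph V} {T : Finset V}
    {hT : ∀ u ∈ T, ∀ v ∈ T, u ≠ v → G.Adj u v} {s : ℕ} (hcard : T.card = s) :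
    Nonempty ((cliqueSub G T hT).coe ≃g (⊤ : SimpleGraph (Fin s))) := by
  classical
  let e : ((cliqueSub G T hT).verts : Set V) ≃ Fin s :=
    (Equiv.subtypeEquivRight (fun x => Iff.rfl)).trans (T.equivFin.trans (finCongr hcard))
  refine ⟨⟨e, ?_⟩⟩
  intro a b
  simp only [SimpleGraph.top_adj]
  constructor
  · intro h
    have hab : a ≠ b := fun hab => h (congrArg e hab)
    exact ⟨a.2, b.2, fun hv => hab (Subtype.ext hv)⟩
  · rintro ⟨-, -, hne⟩
    exact fun hc' => hne (congrArg Subtype.val (e.injective hc'))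

lemma exists_block {n s : ℕ} (hs0 : 0 < s) (hsn : s ≤ n) (a : Fin n) :
    ∃ T : Finset (Fin n), a ∈ T ∧ T.card = s := by
  classical
  set X : Finset (Fin n) := (Finset.univ : Finset (Fin s)).image (Fin.castLE hsn) with hX
  have hXcard : X.card = s := by
    rw [hX, Finset.card_image_of_injective _ (Fin.castLE_injective hsn),
      Finset.card_univ, Fintype.card_fin]
  by_cases h : (a : ℕ) < s
  · refine ⟨X, ?_, hXcard⟩
    exact Finset.mem_image.mpr ⟨⟨(a : ℕ), h⟩, Finset.mem_univ _, by ext; rfl⟩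
  · have hc0 : Fin.castLE hsn ⟨0, hs0⟩ ∈ X :=
      Finset.mem_image.mpr ⟨⟨0, hs0⟩, Finset.mem_univ _, rfl⟩
    have haX : a ∉ X := by
      intro hmem
      obtain ⟨b, -, hb⟩ := Finset.mem_image.mp hmem
      apply h
      rw [← hb]
      exact b.2
    refine ⟨insert a (X.erase (Fin.castLE hsn ⟨0, hs0⟩)), Finset.mem_insert_self _ _, ?_⟩
    rw [Finset.card_insert_of_notMem (fun hmem => haX (Finset.mem_of_mem_erase hmem)),
      Finset.card_erase_of_mem hc0, hXcard]
    omega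

/-- Lift of a subgraph of `DCell n m` into the cell `i` of `DCell n (m+1)`. -/
def liftCell {n m : ℕ} (i : Fin (tcell n m + 1)) (A : (DCell n m).Subgraph) :
    (DCell n (m+1)).Subgraph where
  verts := {p | p.1 = i ∧ p.2 ∈ A.verts}
  Adj p q := p.1 = i ∧ q.1 = i ∧ A.Adj p.2 q.2
  adj_sub h := dcell_succ_adj.mpr (Or.inl ⟨h.1.trans h.2.1.symm, A.adj_sub h.2.2⟩)
  edge_vert h := ⟨h.1, A.edge_vert h.2.2⟩
  symm := ⟨fun p q h => ⟨h.2.1, h.1, A.symm.symm _ _ h.2.2⟩⟩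

lemma liftCell_coe_iso {n m : ℕ} (i : Fin (tcell n m + 1)) (A : (DCell n m).Subgraph) :
    Nonempty ((liftCell i A).coe ≃g A.coe) := by
  refine ⟨⟨⟨fun p => ⟨p.1.2, p.2.2⟩, fun a => ⟨(i, a.1), rfl, a.2⟩, ?_, ?_⟩, ?_⟩⟩
  · intro p
    exact Subtype.ext (Prod.ext p.2.1.symm rfl)
  · intro a; rfl
  · intro p q
    show A.Adj p.1.2 q.1.2 ↔ _
    constructor
    · intro h; exact ⟨p.2.1, q.2.1, h⟩
    · intro h; exact h.2.2

lemma exists_cover {n s : ℕ} (hn : 2 ≤ n) (hs0 : 0 < s) (hsn : s ≤ n) :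
    ∀ m, ∃ F : Finset (DCell n m).Subgraph,
      (∀ A ∈ F, Nonempty (A.coe ≃g (⊤ : SimpleGraph (Fin s)))) ∧
      SimpleGraph.cutVerts F = Set.univ := by
  intro m
  induction m with
  | zero =>
    classical
    choose blk hblk1 hblk2 using exists_block hs0 hsn
    refine ⟨(Finset.univ : Finset (Fin n)).image
      (fun a => cliqueSub (DCell n 0) (blk a)
        (fun u _ v _ huv => dcell_zero_adj.mpr huv)), ?_, ?_⟩
    · intro A hA
      obtain ⟨a, -, rfl⟩ := Finset.mem_image.mp hA
      exact cliqueSub_iso (hblk2 a)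
    · ext b
      simp only [Set.mem_univ, iff_true]
      refine mem_cutVerts.mpr ⟨cliqueSub (DCell n 0) (blk b)
        (fun u _ v _ huv => dcell_zero_adj.mpr huv),
        Finset.mem_image.mpr ⟨b, Finset.mem_univ _, rfl⟩, ?_⟩
      exact Finset.mem_coe.mpr (hblk1 b)
  | succ m ih =>
    classical
    obtain ⟨F0, hF0c, hF0u⟩ := ih
    refine ⟨(Finset.univ : Finset (Fin (tcell n m + 1))).biUnion
      (fun i => F0.image (liftCell i)), ?_, ?_⟩
    · intro A hA
      obtain ⟨i, -, hA2⟩ := Finset.mem_biUnion.mp hA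
      obtain ⟨A0, hA0, rfl⟩ := Finset.mem_image.mp hA2
      obtain ⟨e1⟩ := liftCell_coe_iso i A0
      obtain ⟨e2⟩ := hF0c A0 hA0
      exact ⟨e1.trans e2⟩
    · ext p
      simp only [Set.mem_univ, iff_true]
      have : p.2 ∈ SimpleGraph.cutVerts F0 := by rw [hF0u]; trivial
      obtain ⟨A0, hA0, hp2⟩ := mem_cutVerts.mp this
      refine mem_cutVerts.mpr ⟨liftCell p.1 A0, ?_, rfl, hp2⟩
      exact Finset.mem_biUnion.mpr ⟨p.1, Finset.mem_univ _,
        Finset.mem_image.mpr ⟨A0, hA0, rfl⟩⟩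

end DCellProof

/-- For all integers `m ≥ 0`, `n ≥ 2` and `3 ≤ s ≤ n - 1`,
`κ(D_{m,n}; K_s) ≥ ⌈(n-1)/s⌉ + m`. -/
theorem dcell_complete_structConn_lower (m n s : ℕ) (hn : 2 ≤ n) (hs1 : 3 ≤ s)
    (hs2 : s ≤ n - 1) :
    (n + s - 2) / s + m ≤ (DCell n m).structConn (⊤ : SimpleGraph (Fin s)) := by
  have hne : {k | ∃ F : Finset (DCell n m).Subgraph,
      (DCell n m).IsStructureCut (⊤ : SimpleGraph (Fin s)) F ∧ F.card = k}.Nonempty := by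
    obtain ⟨F, hFc, hFu⟩ := exists_cover (n := n) (s := s) hn (by omega) (by omega) m
    refine ⟨F.card, F, ⟨?_, hFc⟩, rfl⟩
    right
    rw [hFu, Set.compl_univ]
    exact Set.subsingleton_empty
  refine le_csInf hne ?_
  rintro k ⟨F, ⟨hcut, hcl⟩, rfl⟩
  by_contra hlt
  push_neg at hlt
  obtain ⟨hconn, h2⟩ := dcell_main hn hs1 hs2 m F hcl (by omega)
  rcases hcut with h | h
  · exact h hconn
  · obtain ⟨a, ha, b, hb, hab⟩ := (Set.one_lt_ncard (s := ((SimpleGraph.cutVerts F)ᶜ : Set (DCellVertex n m))) (Set.toFinite _)).mp (by omega)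
    exact hab (h ha hb)
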